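/- Let Q(f) = −f^κ + Σ_{α=0}^{κ−1} a_α f^α be a real polynomial of degree κ ≥ 2 whose κ roots q^κ < q^{κ−1} < ⋯ < q^1 are real and distinct. Then for every j ∈ {1,…,κ−1} one has (−1)^j · Σ_{l=1}^{j} 1/Q′(q^l) > 0. (Equivalently, the quantity T^j := π·|Σ_{l=1}^{j} 1/Q′(q^l)| appearing in the main splitting formula is strictly positive, and π·Σ_{l=1}^{j} 1/Q′(q^l) = (−1)^j T^j.) -/

import Mathlib

open Polynomial Finset


noncomputable def dd (q : ℕ → ℝ) (f : ℝ → ℝ) : ℕ → ℕ → ℝ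
  | a, 0 => f (q a)
  | a, n+1 => (dd q f a n - dd q f (a+1) n) / (q a - q (a+n+1))

lemma dd_zero (q : ℕ → ℝ) (f : ℝ → ℝ) (a : ℕ) : dd q f a 0 = f (q a) := rfl

lemma dd_succ (q : ℕ → ℝ) (f : ℝ → ℝ) (a n : ℕ) :
    dd q f a (n+1) = (dd q f a n - dd q f (a+1) n) / (q a - q (a+n+1)) := rfl

lemma dd_inv_linear (q : ℕ → ℝ) (hq : ∀ l m : ℕ, l < m → q m < q l) (c : ℝ) :
    ∀ n a, (∀ i, a ≤ i → i ≤ a + n → c < q i) →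
      dd q (fun x => (x - c)⁻¹) a n = (-1)^n * (∏ i ∈ range (n+1), (q (a+i) - c))⁻¹ := by
  intro n
  induction n with
  | zero => intro a _; simp [dd_zero]
  | succ n ih =>
    intro a hc
    have h1 : dd q (fun x => (x - c)⁻¹) a n = (-1)^n * (∏ i ∈ range (n+1), (q (a+i) - c))⁻¹ :=
      ih a (fun i h1 h2 => hc i h1 (by omega))
    have h2 : dd q (fun x => (x - c)⁻¹) (a+1) n
        = (-1)^n * (∏ i ∈ range (n+1), (q (a+1+i) - c))⁻¹ :=
      ih (a+1) (fun i h1 h2 => hc i (by omega) (by omega))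
    rw [dd_succ, h1, h2]
    have hM : ∀ i ∈ range (n+1), q (a+1+i) - c = q (a+(i+1)) - c := by
      intro i _; congr 2; omega
    rw [Finset.prod_congr rfl hM]
    set P1 : ℝ := ∏ i ∈ range (n+1), (q (a+i) - c) with hP1def
    set P2 : ℝ := ∏ i ∈ range (n+1), (q (a+(i+1)) - c) with hP2def
    have e1 : ∏ i ∈ range (n+2), (q (a+i) - c) = (q a - c) * P2 := by
      rw [Finset.prod_range_succ' (fun i => q (a+i) - c) (n+1)]
      simp [hP2def, mul_comm]
    have key1 : ∏ i ∈ range (n+2), (q (a+i) - c) = P1 * (q (a+(n+1)) - c) := by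
      rw [hP1def, Finset.prod_range_succ]
    have hP1 : (0:ℝ) < P1 := by
      apply Finset.prod_pos
      intro i hi; simp only [mem_range] at hi
      have := hc (a+i) (by omega) (by omega); linarith
    have hP2 : (0:ℝ) < P2 := by
      apply Finset.prod_pos
      intro i hi; simp only [mem_range] at hi
      have := hc (a+(i+1)) (by omega) (by omega); linarith
    have hqa : (0:ℝ) < q a - c := by have := hc a le_rfl (by omega); linarith
    have hqan : (0:ℝ) < q (a+(n+1)) - c := by have := hc (a+(n+1)) (by omega) (by omega); linarith
    have hab : q a - q (a+n+1) ≠ 0 := by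
      have := hq a (a+n+1) (by omega); intro h; linarith
    have key2 : (q a - c) * P2 = P1 * (q (a+(n+1)) - c) := by rw [← e1, key1]
    rw [e1]
    have han : q (a+n+1) = q (a+(n+1)) := by congr 1
    rw [han] at hab ⊢
    rw [div_eq_iff hab, pow_succ]
    have hP1' : P1 ≠ 0 := ne_of_gt hP1
    have hP2' : P2 ≠ 0 := ne_of_gt hP2
    have hqa' : q a - c ≠ 0 := ne_of_gt hqa
    field_simp
    linear_combination key2

lemma dd_mul (q : ℕ → ℝ) (hq : ∀ l m : ℕ, l < m → q m < q l) (f g : ℝ → ℝ) :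
    ∀ n a, dd q (fun x => f x * g x) a n
      = ∑ i ∈ range (n+1), dd q f a i * dd q g (a+i) (n-i) := by
  intro n
  induction n with
  | zero => intro a; simp [dd_zero]
  | succ n ih =>
    intro a
    have hne : ∀ l m : ℕ, l < m → q l - q m ≠ 0 := by
      intro l m h hx; have := hq l m h; linarith
    rw [dd_succ, ih a, ih (a+1), div_eq_iff (hne a (a+n+1) (by omega))]
    -- rewrite first sum terms
    have e1 : ∀ i ∈ range (n+1),
        dd q f a i * dd q g (a+i) (n-i)
        = dd q f a i * ((q (a+i) - q (a+n+1)) * dd q g (a+i) (n+1-i) + dd q g (a+i+1) (n-i)) := by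
      intro i hi; simp only [mem_range] at hi
      have hrec : dd q g (a+i) ((n-i)+1)
          = (dd q g (a+i) (n-i) - dd q g (a+i+1) (n-i)) / (q (a+i) - q (a+i+(n-i)+1)) := dd_succ ..
      have h1 : a+i+(n-i)+1 = a+n+1 := by omega
      have h2 : (n-i)+1 = n+1-i := by omega
      rw [h1, h2] at hrec
      have hd := hne (a+i) (a+n+1) (by omega)
      rw [eq_div_iff hd] at hrec
      have : dd q g (a+i) (n-i) = (q (a+i) - q (a+n+1)) * dd q g (a+i) (n+1-i) + dd q g (a+i+1) (n-i) := by
        linarith [hrec]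
      rw [this]
    -- rewrite second sum terms
    have e2 : ∀ i ∈ range (n+1),
        dd q f (a+1) i * dd q g (a+1+i) (n-i)
        = (dd q f a i - (q a - q (a+i+1)) * dd q f a (i+1)) * dd q g (a+1+i) (n-i) := by
      intro i hi
      have hrec : dd q f a (i+1) = (dd q f a i - dd q f (a+1) i) / (q a - q (a+i+1)) := dd_succ ..
      have hd := hne a (a+i+1) (by omega)
      rw [eq_div_iff hd] at hrec
      have : dd q f (a+1) i = dd q f a i - (q a - q (a+i+1)) * dd q f a (i+1) := by
        linarith [hrec]
      rw [this]
    rw [Finset.sum_congr rfl e1, Finset.sum_congr rfl e2]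
    have split : ∑ i ∈ range (n+1),
        dd q f a i * ((q (a+i) - q (a+n+1)) * dd q g (a+i) (n+1-i) + dd q g (a+i+1) (n-i))
        - ∑ i ∈ range (n+1),
        (dd q f a i - (q a - q (a+i+1)) * dd q f a (i+1)) * dd q g (a+1+i) (n-i)
        = ∑ i ∈ range (n+1),
          ((q (a+i) - q (a+n+1)) * (dd q f a i * dd q g (a+i) (n+1-i))
           + (q a - q (a+i+1)) * (dd q f a (i+1) * dd q g (a+(i+1)) (n+1-(i+1)))) := by
      rw [← Finset.sum_sub_distrib]
      apply Finset.sum_congr rfl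
      intro i hi; simp only [mem_range] at hi
      have h3 : a+1+i = a+i+1 := by omega
      have h4 : a+(i+1) = a+i+1 := by omega
      have h5 : n+1-(i+1) = n-i := by omega
      rw [h3, h4, h5]; ring
    rw [split]
    rw [Finset.sum_add_distrib]
    -- first part: extend to range (n+2)
    have ext1 : ∑ i ∈ range (n+1), (q (a+i) - q (a+n+1)) * (dd q f a i * dd q g (a+i) (n+1-i))
        = ∑ i ∈ range (n+2), (q (a+i) - q (a+n+1)) * (dd q f a i * dd q g (a+i) (n+1-i)) := by
      rw [Finset.sum_range_succ (fun i => (q (a+i) - q (a+n+1)) * (dd q f a i * dd q g (a+i) (n+1-i))) (n+1)]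
      have h : a+(n+1) = a+n+1 := by omega
      simp [h]
    have ext2 : ∑ i ∈ range (n+1), (q a - q (a+(i+1))) * (dd q f a (i+1) * dd q g (a+(i+1)) (n+1-(i+1)))
        = ∑ i ∈ range (n+2), (q a - q (a+i)) * (dd q f a i * dd q g (a+i) (n+1-i)) := by
      rw [Finset.sum_range_succ' (fun i => (q a - q (a+i)) * (dd q f a i * dd q g (a+i) (n+1-i))) (n+1)]
      have h : a+(n+1) = a+n+1 := by omega
      simp [h]
    have fix : ∀ i ∈ range (n+1), (q a - q (a+i+1)) * (dd q f a (i+1) * dd q g (a+(i+1)) (n+1-(i+1)))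
        = (q a - q (a+(i+1))) * (dd q f a (i+1) * dd q g (a+(i+1)) (n+1-(i+1))) := by
      intro i _; rw [show a+(i+1) = a+i+1 by omega]
    rw [Finset.sum_congr rfl fix, ext1, ext2, ← Finset.sum_add_distrib]
    rw [Finset.sum_mul]
    apply Finset.sum_congr rfl
    intro i _; ring

lemma dd_lagrange (q : ℕ → ℝ) (hq : ∀ l m : ℕ, l < m → q m < q l) (f : ℝ → ℝ) :
    ∀ n a, dd q f a n = ∑ i ∈ range (n+1), f (q (a+i)) *
      (∏ m ∈ range (n+1), (if m = i then 1 else q (a+i) - q (a+m)))⁻¹ := by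
  have hne : ∀ l m : ℕ, l ≠ m → q l - q m ≠ 0 := by
    intro l m h hx
    rcases Nat.lt_or_ge l m with h'|h'
    · have := hq l m h'; linarith
    · have : m < l := by omega
      have := hq m l this; linarith
  intro n
  induction n with
  | zero => intro a; simp [dd_zero]
  | succ n ih =>
    intro a
    rw [dd_succ, ih a, ih (a+1), div_eq_iff (hne a (a+n+1) (by omega))]
    set d := q a - q (a+n+1) with hd
    set A : ℕ → ℝ := fun i => if i < n+1 then
        f (q (a+i)) * (∏ m ∈ range (n+1), (if m = i then 1 else q (a+i) - q (a+m)))⁻¹ else 0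
      with hA
    set B : ℕ → ℝ := fun i => if 0 < i then
        f (q (a+1+(i-1))) * (∏ m ∈ range (n+1), (if m = i-1 then 1 else q (a+1+(i-1)) - q (a+1+m)))⁻¹ else 0
      with hB
    have key : ∀ i ∈ range (n+2),
        f (q (a+i)) * (∏ m ∈ range (n+2), (if m = i then 1 else q (a+i) - q (a+m)))⁻¹ * d
        = A i - B i := by
      intro i hi; simp only [mem_range] at hi
      have hsplit : d = (q (a+i) - q (a+n+1)) - (q (a+i) - q a) := by rw [hd]; ring
      -- top decomposition
      have htop : ∏ m ∈ range (n+2), (if m = i then 1 else q (a+i) - q (a+m))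
          = (∏ m ∈ range (n+1), (if m = i then 1 else q (a+i) - q (a+m)))
            * (if n+1 = i then 1 else q (a+i) - q (a+(n+1))) := by
        rw [Finset.prod_range_succ]
      -- bottom decomposition
      have hbot : ∏ m ∈ range (n+2), (if m = i then 1 else q (a+i) - q (a+m))
          = (∏ m ∈ range (n+1), (if m+1 = i then 1 else q (a+i) - q (a+(m+1))))
            * (if 0 = i then 1 else q (a+i) - q a) := by
        rw [Finset.prod_range_succ' (fun m => if m = i then 1 else q (a+i) - q (a+m)) (n+1)]
        simp
      have hApart : f (q (a+i)) * (∏ m ∈ range (n+2), (if m = i then 1 else q (a+i) - q (a+m)))⁻¹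
            * (q (a+i) - q (a+n+1)) = A i := by
        rcases Nat.lt_or_ge i (n+1) with hlt|hge
        · rw [htop, if_neg (by omega)]
          have hc : q (a+i) - q (a+(n+1)) ≠ 0 := by
            rw [show a+(n+1) = a+n+1 by omega]; exact hne (a+i) (a+n+1) (by omega)
          rw [mul_inv, hA]
          simp only [if_pos hlt]
          rw [show a+(n+1) = a+n+1 by omega]
          have hP : (∏ m ∈ range (n+1), (if m = i then 1 else q (a+i) - q (a+m))) ≠ 0 := by
            apply Finset.prod_ne_zero_iff.mpr
            intro m hm
            by_cases hmi : m = i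
            · rw [if_pos hmi]; exact one_ne_zero
            · rw [if_neg hmi]; exact hne (a+i) (a+m) (by omega)
          rw [show a+(n+1) = a+n+1 by omega] at hc
          field_simp
        · have hi' : i = n+1 := by omega
          rw [hA]; simp only [if_neg (by omega : ¬ i < n+1)]
          rw [hi', show a+(n+1) = a+n+1 by omega]
          ring
      have hBpart : f (q (a+i)) * (∏ m ∈ range (n+2), (if m = i then 1 else q (a+i) - q (a+m)))⁻¹
            * (q (a+i) - q a) = B i := by
        rcases Nat.eq_zero_or_pos i with rfl|hpos
        · rw [hB]; simp only [if_neg (by omega : ¬ 0 < 0)]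
          simp
        · rw [hbot, if_neg (by omega)]
          have hc : q (a+i) - q a ≠ 0 := by
            rw [show a+i = a+i by rfl]; exact (by
              have : a < a + i := by omega
              intro hx; have := hq a (a+i) this; linarith)
          have hprod : (∏ m ∈ range (n+1), (if m+1 = i then 1 else q (a+i) - q (a+(m+1))))
              = ∏ m ∈ range (n+1), (if m = i-1 then 1 else q (a+1+(i-1)) - q (a+1+m)) := by
            apply Finset.prod_congr rfl
            intro m _
            have hiff : (m+1 = i) ↔ (m = i-1) := by omega
            by_cases hcase : m = i-1
            · rw [if_pos (by omega), if_pos hcase]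
            · rw [if_neg (by omega), if_neg hcase]
              rw [show a+1+(i-1) = a+i by omega, show a+1+m = a+(m+1) by omega]
          rw [mul_inv, hprod, hB]
          simp only [if_pos hpos]
          rw [show a+1+(i-1) = a+i by omega]
          have hP : (∏ m ∈ range (n+1), (if m = i-1 then 1 else q (a+i) - q (a+1+m))) ≠ 0 := by
            apply Finset.prod_ne_zero_iff.mpr
            intro m hm; simp only [mem_range] at hm
            by_cases hmi : m = i-1
            · rw [if_pos hmi]; exact one_ne_zero
            · rw [if_neg hmi]
              exact hne (a+i) (a+1+m) (by omega)
          field_simp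
      rw [hsplit]
      have : f (q (a+i)) * (∏ m ∈ range (n+2), (if m = i then 1 else q (a+i) - q (a+m)))⁻¹
          * ((q (a+i) - q (a+n+1)) - (q (a+i) - q a))
          = f (q (a+i)) * (∏ m ∈ range (n+2), (if m = i then 1 else q (a+i) - q (a+m)))⁻¹
            * (q (a+i) - q (a+n+1))
          - f (q (a+i)) * (∏ m ∈ range (n+2), (if m = i then 1 else q (a+i) - q (a+m)))⁻¹
            * (q (a+i) - q a) := by ring
      rw [this, hApart, hBpart]
    rw [Finset.sum_mul, Finset.sum_congr rfl key, Finset.sum_sub_distrib]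
    have sumA : ∑ i ∈ range (n+2), A i
        = ∑ i ∈ range (n+1), f (q (a+i)) * (∏ m ∈ range (n+1), (if m = i then 1 else q (a+i) - q (a+m)))⁻¹ := by
      rw [Finset.sum_range_succ, hA]
      simp only [if_neg (by omega : ¬ n+1 < n+1), add_zero]
      apply Finset.sum_congr rfl
      intro i hi; simp only [mem_range] at hi
      rw [if_pos hi]
    have sumB : ∑ i ∈ range (n+2), B i
        = ∑ i ∈ range (n+1), f (q (a+1+i)) * (∏ m ∈ range (n+1), (if m = i then 1 else q (a+1+i) - q (a+1+m)))⁻¹ := by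
      rw [Finset.sum_range_succ' B (n+1), hB]
      simp only [if_neg (by omega : ¬ (0:ℕ) < 0), add_zero]
      apply Finset.sum_congr rfl
      intro i hi; simp only [mem_range] at hi
      simp only [if_pos (by omega : 0 < i+1), Nat.add_sub_cancel]
    rw [sumA, sumB]
-- sign lemmas, to be appended after dd4 content
lemma dd_sign_linear (q : ℕ → ℝ) (hq : ∀ l m : ℕ, l < m → q m < q l) (c : ℝ) (n a : ℕ)
    (hc : ∀ i, a ≤ i → i ≤ a + n → c < q i) :
    0 < (-1:ℝ)^n * dd q (fun x => (x - c)⁻¹) a n := by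
  rw [dd_inv_linear q hq c n a hc, ← mul_assoc, ← mul_pow]
  norm_num
  apply Finset.prod_pos
  intro i hi; simp only [mem_range] at hi
  have := hc (a+i) (by omega) (by omega); linarith

lemma dd_sign (q : ℕ → ℝ) (hq : ∀ l m : ℕ, l < m → q m < q l) :
    ∀ s n a b : ℕ, a + n ≤ b →
      0 < (-1:ℝ)^n * dd q (fun x => (∏ t ∈ range (s+1), (x - q (b+1+t)))⁻¹) a n := by
  intro s
  induction s with
  | zero =>
    intro n a b hab
    have hf : (fun x : ℝ => (∏ t ∈ range 1, (x - q (b+1+t)))⁻¹) = fun x => (x - q (b+1))⁻¹ := by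
      funext x; simp
    rw [hf]
    exact dd_sign_linear q hq (q (b+1)) n a (fun i h1 h2 => hq i (b+1) (by omega))
  | succ s ih =>
    intro n a b hab
    have hf : (fun x : ℝ => (∏ t ∈ range (s+2), (x - q (b+1+t)))⁻¹)
        = fun x => (x - q (b+1))⁻¹ * (∏ t ∈ range (s+1), (x - q (b+1+1+t)))⁻¹ := by
      funext x
      rw [Finset.prod_range_succ' (fun t => x - q (b+1+t)) (s+1), mul_inv]
      rw [mul_comm]
      congr 2
      apply Finset.prod_congr rfl
      intro t _
      rw [show b+1+(t+1) = b+1+1+t by omega]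
    rw [hf, dd_mul q hq _ _ n a, Finset.mul_sum]
    apply Finset.sum_pos
    · intro i hi; simp only [mem_range] at hi
      have e : (-1:ℝ)^n = (-1)^i * (-1)^(n-i) := by rw [← pow_add]; congr 1; omega
      rw [e]
      have hg : 0 < (-1:ℝ)^i * dd q (fun x => (x - q (b+1))⁻¹) a i :=
        dd_sign_linear q hq (q (b+1)) i a (fun m h1 h2 => hq m (b+1) (by omega))
      have hh : 0 < (-1:ℝ)^(n-i) * dd q (fun x => (∏ t ∈ range (s+1), (x - q (b+1+1+t)))⁻¹) (a+i) (n-i) :=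
        ih (n-i) (a+i) (b+1) (by omega)
      calc (0:ℝ) < ((-1:ℝ)^i * dd q (fun x => (x - q (b+1))⁻¹) a i)
            * ((-1:ℝ)^(n-i) * dd q (fun x => (∏ t ∈ range (s+1), (x - q (b+1+1+t)))⁻¹) (a+i) (n-i)) :=
          mul_pos hg hh
        _ = (-1:ℝ)^i * (-1)^(n-i) * (dd q (fun x => (x - q (b+1))⁻¹) a i
            * dd q (fun x => (∏ t ∈ range (s+1), (x - q (b+1+1+t)))⁻¹) (a+i) (n-i)) := by ring
    · exact ⟨0, by simp⟩
section Assembly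
open Polynomial

lemma prod_if_eq_erase (G : ℕ → ℝ) (s : Finset ℕ) (i : ℕ) (hi : i ∈ s) :
    ∏ m ∈ s, (if m = i then 1 else G m) = ∏ m ∈ s.erase i, G m := by
  rw [← Finset.mul_prod_erase s _ hi, if_pos rfl, one_mul]
  apply Finset.prod_congr rfl
  intro m hm
  rw [if_neg (Finset.ne_of_mem_erase hm)]

lemma Q_eq_neg_prod (κ : ℕ) (hκ : 2 ≤ κ) (a : ℕ → ℝ) (Q : Polynomial ℝ)
    (hQ : Q = -(X ^ κ) + ∑ α ∈ Finset.range κ, C (a α) * X ^ α)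
    (q : ℕ → ℝ)
    (hroot : ∀ l < κ, Q.eval (q l) = 0)
    (hord : ∀ l m : ℕ, l < m → m < κ → q m < q l) :
    Q = -∏ m ∈ Finset.range κ, (X - C (q m)) := by
  set P : Polynomial ℝ := ∏ m ∈ Finset.range κ, (X - C (q m)) with hP
  have hPmonic : P.Monic := monic_prod_of_monic _ _ (fun m _ => monic_X_sub_C (q m))
  have hPdeg : P.natDegree = κ := by
    rw [hP, natDegree_prod_of_monic _ _ (fun m _ => monic_X_sub_C (q m))]
    simp
  have hzero : Q + P = 0 := by
    by_cases h0 : Q + P = 0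
    · exact h0
    have hdeglt : (Q + P).degree < (κ : ℕ) := by
      have h1 : Q + P = (∑ α ∈ Finset.range κ, C (a α) * X ^ α) + (P - X ^ κ) := by
        rw [hQ]; ring
      rw [h1]
      apply lt_of_le_of_lt (degree_add_le _ _)
      rw [max_lt_iff]
      constructor
      · apply lt_of_le_of_lt (degree_sum_le _ _)
        rw [Finset.sup_lt_iff (by exact_mod_cast WithBot.bot_lt_coe (κ:ℕ))]
        intro α hα
        apply lt_of_le_of_lt (degree_C_mul_X_pow_le _ _)
        exact_mod_cast Nat.cast_lt.mpr (Finset.mem_range.mp hα)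
      · have hdP : P.degree = (κ : ℕ) := by
          rw [degree_eq_natDegree hPmonic.ne_zero, hPdeg]
        have hXκ : (X ^ κ : Polynomial ℝ).degree = (κ:ℕ) := degree_X_pow κ
        have := degree_sub_lt (p := P) (q := X ^ κ) (by rw [hdP, hXκ]) hPmonic.ne_zero
          (by rw [hPmonic.leadingCoeff, leadingCoeff_X_pow])
        rwa [hdP] at this
    have hinj : Function.Injective (fun i : Fin κ => q i.val) := by
      intro i j hij
      by_contra hne
      have hne' : i.val ≠ j.val := fun h => hne (Fin.ext h)
      rcases Nat.lt_or_ge i.val j.val with h|h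
      · have := hord i.val j.val h j.isLt; simp only at hij; linarith [this]
      · have h' : j.val < i.val := by omega
        have := hord j.val i.val h' i.isLt; simp only at hij; linarith [this]
    have heval : ∀ i : Fin κ, (Q + P).eval (q i.val) = 0 := by
      intro i
      rw [eval_add, hroot i.val i.isLt, zero_add, hP, eval_prod]
      apply Finset.prod_eq_zero (Finset.mem_range.mpr i.isLt)
      simp
    have := Polynomial.eq_zero_of_natDegree_lt_card_of_eval_eq_zero (Q+P) hinj heval
      (by rw [Fintype.card_fin]; exact (natDegree_lt_iff_degree_lt h0).mpr hdeglt)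
    exact this
  have : Q = -P := by linear_combination hzero
  exact this
lemma deriv_prod_eval (κ l : ℕ) (q : ℕ → ℝ) (hl : l < κ) :
    (Polynomial.derivative (∏ m ∈ Finset.range κ, (X - C (q m)))).eval (q l)
      = ∏ m ∈ (Finset.range κ).erase l, (q l - q m) := by
  rw [← Finset.mul_prod_erase (Finset.range κ) _ (Finset.mem_range.mpr hl), derivative_mul]
  simp [eval_prod]


/-- For a real polynomial `Q(f) = -f^κ + Σ_{α<κ} a_α f^α` of degree `κ ≥ 2`
with `κ` distinct real roots `q^κ < ⋯ < q^1` (here `q l` denotes the root `q^{l+1}`,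
so `q` is strictly decreasing in the index), for every `j ∈ {1,…,κ-1}` one has
`(-1)^j · Σ_{l=1}^{j} 1/Q'(q^l) > 0`. -/
theorem zeroHopf_splitting_time_positive
    (κ : ℕ) (hκ : 2 ≤ κ) (a : ℕ → ℝ) (Q : Polynomial ℝ)
    (hQ : Q = -(X ^ κ) + ∑ α ∈ Finset.range κ, C (a α) * X ^ α)
    (q : ℕ → ℝ)
    (hroot : ∀ l < κ, Q.eval (q l) = 0)
    (hord : ∀ l m : ℕ, l < m → m < κ → q m < q l)
    (j : ℕ) (hj1 : 1 ≤ j) (hjκ : j ≤ κ - 1) :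
    0 < (-1 : ℝ) ^ j * ∑ l ∈ Finset.range j, (Q.derivative.eval (q l))⁻¹ := by
  obtain ⟨n, rfl⟩ : ∃ n, j = n + 1 := ⟨j - 1, by omega⟩
  set q' : ℕ → ℝ := fun l => if l < κ then q l else q (κ-1) - ((l:ℝ) + 1 - κ) with hq'def
  have hagree : ∀ l, l < κ → q' l = q l := fun l hl => by simp [hq'def, hl]
  have hq' : ∀ l m : ℕ, l < m → q' m < q' l := by
    intro l m hlm
    by_cases hm : m < κ
    · rw [hagree l (by omega), hagree m hm]; exact hord l m hlm hm
    · by_cases hl : l < κ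
      · rw [hagree l hl]
        have h1 : q (κ-1) ≤ q l := by
          rcases Nat.eq_or_lt_of_le (by omega : l ≤ κ-1) with h|h
          · rw [h]
          · exact le_of_lt (hord l (κ-1) h (by omega))
        have h2 : ((m:ℝ) + 1 - κ) > 0 := by
          have : (κ:ℝ) ≤ m := by exact_mod_cast Nat.le_of_not_lt hm
          linarith
        simp only [hq'def, if_neg hm]
        linarith
      · simp only [hq'def, if_neg hm, if_neg hl]
        have : (l:ℝ) < m := by exact_mod_cast hlm
        linarith
  have hfac := Q_eq_neg_prod κ hκ a Q hQ q hroot hord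
  have hderiv : ∀ l, l < κ →
      Q.derivative.eval (q l) = -∏ m ∈ (Finset.range κ).erase l, (q l - q m) := by
    intro l hl
    rw [hfac, derivative_neg, eval_neg, deriv_prod_eval κ l q hl]
  have hκn : n + 1 ≤ κ - 1 := hjκ
  set F : ℝ → ℝ := fun x => (∏ t ∈ Finset.range (κ-n-2+1), (x - q' (n+1+t)))⁻¹ with hF
  have hterm : ∀ l ∈ Finset.range (n+1),
      (Q.derivative.eval (q l))⁻¹
      = -(F (q' (0+l)) * (∏ m ∈ Finset.range (n+1), (if m = l then 1 else q' (0+l) - q' (0+m)))⁻¹) := by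
    intro l hl
    simp only [Finset.mem_range] at hl
    have hlκ : l < κ := by omega
    rw [hderiv l hlκ]
    have hsplit : (Finset.range κ).erase l = ((Finset.range (n+1)).erase l) ∪ Finset.Ico (n+1) κ := by
      ext m
      simp only [Finset.mem_erase, Finset.mem_range, Finset.mem_union, Finset.mem_Ico]
      omega
    have hdisj : Disjoint ((Finset.range (n+1)).erase l) (Finset.Ico (n+1) κ) := by
      rw [Finset.disjoint_left]
      intro m hm hm'
      simp only [Finset.mem_erase, Finset.mem_range] at hm
      simp only [Finset.mem_Ico] at hm'
      omega
    rw [hsplit, Finset.prod_union hdisj]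
    have hA : ∏ m ∈ Finset.range (n+1), (if m = l then 1 else q' (0+l) - q' (0+m))
        = ∏ m ∈ (Finset.range (n+1)).erase l, (q l - q m) := by
      rw [prod_if_eq_erase (fun m => q' (0+l) - q' (0+m)) (Finset.range (n+1)) l
        (Finset.mem_range.mpr (by omega))]
      apply Finset.prod_congr rfl
      intro m hm
      have hm' : m < n+1 := Finset.mem_range.mp (Finset.mem_of_mem_erase hm)
      simp only [Nat.zero_add]
      rw [hagree l hlκ, hagree m (by omega)]
    have hB : F (q' (0+l)) = (∏ m ∈ Finset.Ico (n+1) κ, (q l - q m))⁻¹ := by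
      rw [hF]
      simp only [Nat.zero_add]
      congr 1
      rw [Finset.prod_Ico_eq_prod_range]
      rw [show κ-n-2+1 = κ-(n+1) by omega]
      apply Finset.prod_congr rfl
      intro t ht
      simp only [Finset.mem_range] at ht
      rw [hagree l hlκ, hagree (n+1+t) (by omega)]
    rw [hB, hA, inv_neg, mul_inv]
    ring
  have hsum : ∑ l ∈ Finset.range (n+1), (Q.derivative.eval (q l))⁻¹ = -dd q' F 0 n := by
    rw [Finset.sum_congr rfl hterm, dd_lagrange q' hq' F n 0]
    rw [← Finset.sum_neg_distrib]
  have hsign := dd_sign q' hq' (κ-n-2) n 0 n (by omega)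
  rw [hsum]
  have hrw : (-1:ℝ)^(n+1) * (-dd q' F 0 n) = (-1:ℝ)^n * dd q' F 0 n := by
    rw [pow_succ]; ring
  rw [hrw]
  rw [hF]
  exact hsign

end Assembly
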